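/- In one GSTP time step on an m1 × m2 grid with k escorts, the number of tiles that move is at most k · (max(m1, m2) − 1). -/

import Mathlib

/-- A cell of an `m₁ × m₂` grid. -/
abbrev Cell (m₁ m₂ : ℕ) := Fin m₁ × Fin m₂

/-- Manhattan (L1) distance between two cells. -/
def manhattan {m₁ m₂ : ℕ} (p q : Cell m₁ m₂) : ℕ :=
  ((p.1.val : ℤ) - (q.1.val : ℤ)).natAbs + ((p.2.val : ℤ) - (q.2.val : ℤ)).natAbs

/-- The movement direction vector of tile `i` between configurations `c` and `c'`. -/
def dirOf {m₁ m₂ n : ℕ} (c c' : Fin n → Cell m₁ m₂) (i : Fin n) : ℤ × ℤ :=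
  (((c' i).1.val : ℤ) - ((c i).1.val : ℤ), ((c' i).2.val : ℤ) - ((c i).2.val : ℤ))

/-- One synchronous time step of the generalized sliding-tile puzzle: every tile stays or
moves to an adjacent cell, no meet collisions, no head-on collisions, and the
corner-following constraint holds. -/
structure GstpStep (m₁ m₂ n : ℕ) (c c' : Fin n → Cell m₁ m₂) : Prop where
  start_inj : Function.Injective c
  end_inj : Function.Injective c'
  move : ∀ i, manhattan (c i) (c' i) ≤ 1
  no_swap : ∀ i j, i ≠ j → ¬(c' i = c j ∧ c' j = c i)
  cfc : ∀ i j, i ≠ j → c' i = c j → c' i ≠ c i →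
    (dirOf c c' i).1 * (dirOf c c' j).1 + (dirOf c c' i).2 * (dirOf c c' j).2 ≠ 0

/-- The GSTP instance with start `s` and goal `g` is solvable within `T` time steps. -/
def SolvableIn (m₁ m₂ n T : ℕ) (s g : Fin n → Cell m₁ m₂) : Prop :=
  ∃ T' ≤ T, ∃ c : ℕ → Fin n → Cell m₁ m₂, c 0 = s ∧ c T' = g ∧
    ∀ t < T', GstpStep m₁ m₂ n (c t) (c (t + 1))

/-- Potential of tile `i`: coordinate of its cell in its direction of motion. -/
def psi {m₁ m₂ n : ℕ} (c c' : Fin n → Cell m₁ m₂) (i : Fin n) : ℤ :=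
  (dirOf c c' i).1 * ((c i).1.val : ℤ) + (dirOf c c' i).2 * ((c i).2.val : ℤ)

lemma unit_self_dot (a b : ℤ) (h : a.natAbs + b.natAbs = 1) : a * a + b * b = 1 := by
  have hc : (a = 1 ∧ b = 0) ∨ (a = -1 ∧ b = 0) ∨ (a = 0 ∧ b = 1) ∨ (a = 0 ∧ b = -1) := by
    omega
  rcases hc with ⟨rfl, rfl⟩ | ⟨rfl, rfl⟩ | ⟨rfl, rfl⟩ | ⟨rfl, rfl⟩ <;> norm_num

lemma unit_dot_cases (a b p q : ℤ) (h1 : a.natAbs + b.natAbs = 1)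
    (h2 : p.natAbs + q.natAbs = 1) (h3 : a * p + b * q ≠ 0) :
    (p = a ∧ q = b) ∨ (p = -a ∧ q = -b) := by
  have ha : (a = 1 ∧ b = 0) ∨ (a = -1 ∧ b = 0) ∨ (a = 0 ∧ b = 1) ∨ (a = 0 ∧ b = -1) := by
    omega
  have hp : (p = 1 ∧ q = 0) ∨ (p = -1 ∧ q = 0) ∨ (p = 0 ∧ q = 1) ∨ (p = 0 ∧ q = -1) := by
    omega
  rcases ha with ⟨rfl, rfl⟩ | ⟨rfl, rfl⟩ | ⟨rfl, rfl⟩ | ⟨rfl, rfl⟩ <;>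
    rcases hp with ⟨rfl, rfl⟩ | ⟨rfl, rfl⟩ | ⟨rfl, rfl⟩ | ⟨rfl, rfl⟩ <;>
      norm_num at *

lemma dot_bound (a b x y m₁ m₂ M : ℤ) (h : a.natAbs + b.natAbs = 1)
    (hx0 : 0 ≤ x) (hx1 : x < m₁) (hy0 : 0 ≤ y) (hy1 : y < m₂)
    (h1 : m₁ ≤ M) (h2 : m₂ ≤ M) :
    -(M - 1) ≤ a * x + b * y ∧ a * x + b * y ≤ M - 1 := by
  have ha : (a = 1 ∧ b = 0) ∨ (a = -1 ∧ b = 0) ∨ (a = 0 ∧ b = 1) ∨ (a = 0 ∧ b = -1) := by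
    omega
  rcases ha with ⟨rfl, rfl⟩ | ⟨rfl, rfl⟩ | ⟨rfl, rfl⟩ | ⟨rfl, rfl⟩ <;>
    constructor <;> omega

lemma dot_diff_bound (a b x1 y1 x2 y2 m₁ m₂ M : ℤ) (h : a.natAbs + b.natAbs = 1)
    (hx10 : 0 ≤ x1) (hx11 : x1 < m₁) (hy10 : 0 ≤ y1) (hy11 : y1 < m₂)
    (hx20 : 0 ≤ x2) (hx21 : x2 < m₁) (hy20 : 0 ≤ y2) (hy21 : y2 < m₂)
    (h1 : m₁ ≤ M) (h2 : m₂ ≤ M) :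
    a * x2 + b * y2 - (a * x1 + b * y1) ≤ M - 1 := by
  have ha : (a = 1 ∧ b = 0) ∨ (a = -1 ∧ b = 0) ∨ (a = 0 ∧ b = 1) ∨ (a = 0 ∧ b = -1) := by
    omega
  rcases ha with ⟨rfl, rfl⟩ | ⟨rfl, rfl⟩ | ⟨rfl, rfl⟩ | ⟨rfl, rfl⟩ <;> omega

lemma cell_eq_of_int {m₁ m₂ : ℕ} {p q : Cell m₁ m₂}
    (h1 : (p.1.val : ℤ) = (q.1.val : ℤ)) (h2 : (p.2.val : ℤ) = (q.2.val : ℤ)) : p = q := by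
  refine Prod.ext (Fin.ext ?_) (Fin.ext ?_)
  · exact_mod_cast h1
  · exact_mod_cast h2

/-- In one GSTP time step on an `m₁ × m₂` grid with `k` escorts, the number
of tiles that move is at most `k * (max m₁ m₂ - 1)`. -/
theorem gstp_step_moving_tiles_le
    (m₁ m₂ n k : ℕ) (hesc : n + k = m₁ * m₂)
    (c c' : Fin n → Cell m₁ m₂) (hstep : GstpStep m₁ m₂ n c c') :
    (Finset.univ.filter fun i => c' i ≠ c i).card ≤ k * (max m₁ m₂ - 1) := by
  classical
  -- the successor (the tile currently occupying the cell a tile moves into)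
  set g : Fin n → Fin n := fun i => if h : ∃ j, c j = c' i then h.choose else i with hgdef
  have hgspec : ∀ i, (∃ j, c j = c' i) → c (g i) = c' i := by
    intro i h
    simp only [hgdef, dif_pos h]
    exact h.choose_spec
  -- unit direction vectors
  have hunit : ∀ i, c' i ≠ c i →
      (dirOf c c' i).1.natAbs + (dirOf c c' i).2.natAbs = 1 := by
    intro i hi
    have h1 := hstep.move i
    unfold manhattan at h1
    have hne : ¬((((c' i).1.val : ℤ) = ((c i).1.val : ℤ)) ∧
        (((c' i).2.val : ℤ) = ((c i).2.val : ℤ))) := by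
      rintro ⟨ha, hb⟩
      exact hi (cell_eq_of_int ha hb)
    unfold dirOf
    simp only
    omega
  -- the chain step lemma
  have hstep1 : ∀ i, c' i ≠ c i → (∃ j, c j = c' i) →
      c (g i) = c' i ∧ c' (g i) ≠ c (g i) ∧ dirOf c c' (g i) = dirOf c c' i := by
    intro i hi hex
    have hcj : c (g i) = c' i := hgspec i hex
    have hji : g i ≠ i := by
      intro h
      rw [h] at hcj
      exact hi hcj.symm
    have hqj : c' (g i) ≠ c (g i) := by
      intro h
      rw [hcj] at h
      exact hji (hstep.end_inj h)
    refine ⟨hcj, hqj, ?_⟩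
    have hdot := hstep.cfc i (g i) (Ne.symm hji) hcj.symm hi
    have hu1 := hunit i hi
    have hu2 := hunit (g i) hqj
    rcases unit_dot_cases _ _ _ _ hu1 hu2 hdot with ⟨h1, h2⟩ | ⟨h1, h2⟩
    · exact Prod.ext h1 h2
    · exfalso
      refine hstep.no_swap i (g i) (Ne.symm hji) ⟨hcj.symm, ?_⟩
      simp only [dirOf] at h1 h2
      have e1 : ((c (g i)).1.val : ℤ) = ((c' i).1.val : ℤ) := by rw [hcj]
      have e2 : ((c (g i)).2.val : ℤ) = ((c' i).2.val : ℤ) := by rw [hcj]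
      exact cell_eq_of_int (by linarith) (by linarith)
  -- potential increases by 1 along a chain
  have hpsistep : ∀ i, c' i ≠ c i → (∃ j, c j = c' i) →
      psi c c' (g i) = psi c c' i + 1 := by
    intro i hi hex
    obtain ⟨hc, hq, hd⟩ := hstep1 i hi hex
    have h1 := unit_self_dot _ _ (hunit i hi)
    unfold psi
    rw [hd, hc]
    simp only [dirOf] at h1 ⊢
    linear_combination h1
  -- chain invariant
  have hiter : ∀ (d : ℕ) (i : Fin n), c' i ≠ c i →
      (∀ r < d, ∃ j, c j = c' (g^[r] i)) →
      (c' (g^[d] i) ≠ c (g^[d] i)) ∧ dirOf c c' (g^[d] i) = dirOf c c' i ∧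
        psi c c' (g^[d] i) = psi c c' i + d := by
    intro d
    induction d with
    | zero => intro i hi _; exact ⟨hi, rfl, by simp⟩
    | succ d ih =>
      intro i hi hr
      obtain ⟨hq, hdir, hψ⟩ := ih i hi (fun r h => hr r (Nat.lt_succ_of_lt h))
      have hex : ∃ j, c j = c' (g^[d] i) := hr d (Nat.lt_succ_self d)
      obtain ⟨hc1, hq1, hd1⟩ := hstep1 _ hq hex
      have hps := hpsistep _ hq hex
      rw [Function.iterate_succ_apply']
      refine ⟨hq1, hd1.trans hdir, ?_⟩
      rw [hps, hψ]
      push_cast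
      ring
  -- bounds on psi
  have hψbd : ∀ i, c' i ≠ c i →
      -(((max m₁ m₂ : ℕ) : ℤ) - 1) ≤ psi c c' i ∧
        psi c c' i ≤ ((max m₁ m₂ : ℕ) : ℤ) - 1 := by
    intro i hi
    exact dot_bound _ _ _ _ (m₁ : ℤ) (m₂ : ℤ) _ (hunit i hi)
      (by positivity) (by exact_mod_cast (c i).1.isLt)
      (by positivity) (by exact_mod_cast (c i).2.isLt)
      (by exact_mod_cast Nat.le_max_left m₁ m₂) (by exact_mod_cast Nat.le_max_right m₁ m₂)
  -- termination of chains
  have hterm : ∀ i, c' i ≠ c i → ∃ d, ¬∃ j, c j = c' (g^[d] i) := by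
    intro i hi
    by_contra hcon
    push_neg at hcon
    set M : ℕ := max m₁ m₂ with hM
    obtain ⟨hq, hdir, hψ⟩ := hiter (2 * M + 2) i hi (fun r _ => hcon r)
    have b1 := (hψbd i hi).1
    have b2 := (hψbd _ hq).2
    rw [hψ] at b2
    push_cast at b1 b2
    have hM0 : (0 : ℤ) ≤ (M : ℤ) := by positivity
    linarith
  -- minimal chain length to an escort
  have hD : ∀ i : Fin n, ∃ d, c' i ≠ c i → ¬∃ j, c j = c' (g^[d] i) := by
    intro i
    by_cases hi : c' i ≠ c i
    · obtain ⟨d, hd⟩ := hterm i hi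
      exact ⟨d, fun _ => hd⟩
    · exact ⟨0, fun h => absurd h hi⟩
  set D : Fin n → ℕ := fun i => Nat.find (hD i) with hDdef
  have hDspec : ∀ i, c' i ≠ c i → ¬∃ j, c j = c' (g^[D i] i) := fun i hi =>
    Nat.find_spec (hD i) hi
  have hDmin : ∀ i, c' i ≠ c i → ∀ r < D i, ∃ j, c j = c' (g^[r] i) := by
    intro i hi r hr
    have h := Nat.find_min (hD i) hr
    push_neg at h
    exact h.2
  -- bound on chain length : D i < max m₁ m₂ - 1
  have hDbd : ∀ i, c' i ≠ c i → D i < max m₁ m₂ - 1 := by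
    intro i hi
    obtain ⟨hq, hdir, hψ⟩ := hiter (D i) i hi (hDmin i hi)
    set h' : Fin n := g^[D i] i with hh'
    set a : ℤ := (dirOf c c' i).1 with hadef
    set b : ℤ := (dirOf c c' i).2 with hbdef
    have u : a * a + b * b = 1 := unit_self_dot _ _ (hunit i hi)
    have hd1 : (dirOf c c' h').1 = a := by rw [hdir]
    have hd2 : (dirOf c c' h').2 = b := by rw [hdir]
    simp only [dirOf] at hd1 hd2
    -- dot of dir with the escort cell c' h'
    have key : a * ((c' h').1.val : ℤ) + b * ((c' h').2.val : ℤ) =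
        psi c c' i + (D i : ℤ) + 1 := by
      have hψh : psi c c' h' = a * ((c h').1.val : ℤ) + b * ((c h').2.val : ℤ) := by
        unfold psi
        rw [hdir]
      have := hψ
      rw [hψh] at this
      linear_combination this + u + a * hd1 + b * hd2
    have hdb := dot_diff_bound a b ((c i).1.val : ℤ) ((c i).2.val : ℤ)
      ((c' h').1.val : ℤ) ((c' h').2.val : ℤ) (m₁ : ℤ) (m₂ : ℤ) ((max m₁ m₂ : ℕ) : ℤ)
      (hunit i hi)
      (by positivity) (by exact_mod_cast (c i).1.isLt)
      (by positivity) (by exact_mod_cast (c i).2.isLt)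
      (by positivity) (by exact_mod_cast (c' h').1.isLt)
      (by positivity) (by exact_mod_cast (c' h').2.isLt)
      (by exact_mod_cast Nat.le_max_left m₁ m₂) (by exact_mod_cast Nat.le_max_right m₁ m₂)
    rw [key] at hdb
    have hψi : psi c c' i = a * ((c i).1.val : ℤ) + b * ((c i).2.val : ℤ) := rfl
    rw [hψi] at hdb
    omega
  -- injectivity of chains
  have hinjchain : ∀ (r : ℕ) (a b : Fin n),
      (∀ s < r, ∃ j, c j = c' (g^[s] a)) → (∀ s < r, ∃ j, c j = c' (g^[s] b)) →
      g^[r] a = g^[r] b → a = b := by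
    intro r
    induction r with
    | zero => intro a b _ _ h; simpa using h
    | succ r ih =>
      intro a b hA hB heq
      rw [Function.iterate_succ_apply', Function.iterate_succ_apply'] at heq
      have hexa := hA r (Nat.lt_succ_self r)
      have hexb := hB r (Nat.lt_succ_self r)
      have h1 : c (g (g^[r] a)) = c' (g^[r] a) := hgspec _ hexa
      have h2 : c (g (g^[r] b)) = c' (g^[r] b) := hgspec _ hexb
      have h3 : c' (g^[r] a) = c' (g^[r] b) := by rw [← h1, ← h2, heq]
      exact ih a b (fun s hs => hA s (Nat.lt_succ_of_lt hs))
        (fun s hs => hB s (Nat.lt_succ_of_lt hs)) (hstep.end_inj h3)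
  -- the counting argument
  set S : Finset (Fin n) := Finset.univ.filter fun i => c' i ≠ c i with hS
  set E : Finset (Cell m₁ m₂) := Finset.univ \ Finset.image c Finset.univ with hE
  set T : Finset (Cell m₁ m₂ × ℕ) := E ×ˢ Finset.range (max m₁ m₂ - 1) with hT
  have hmaps : ∀ i ∈ S, (c' (g^[D i] i), D i) ∈ T := by
    intro i hiS
    have hi : c' i ≠ c i := by
      simpa [hS] using hiS
    rw [hT, Finset.mem_product]
    constructor
    · rw [hE, Finset.mem_sdiff]
      refine ⟨Finset.mem_univ _, ?_⟩
      rw [Finset.mem_image]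
      rintro ⟨j, -, hj⟩
      exact hDspec i hi ⟨j, hj⟩
    · exact Finset.mem_range.mpr (hDbd i hi)
  have hinjS : Set.InjOn (fun i => (c' (g^[D i] i), D i)) S := by
    intro i hiS j hjS hij
    have hi : c' i ≠ c i := by simpa [hS] using hiS
    have hj : c' j ≠ c j := by simpa [hS] using hjS
    simp only [Prod.mk.injEq] at hij
    obtain ⟨h1, h2⟩ := hij
    have hh : g^[D i] i = g^[D i] j := by
      have := hstep.end_inj h1
      rw [this, h2]
    exact hinjchain (D i) i j (hDmin i hi) (fun s hs => hDmin j hj s (h2 ▸ hs)) hh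
  have hcard := Finset.card_le_card_of_injOn _ hmaps hinjS
  have hTcard : T.card = (m₁ * m₂ - n) * (max m₁ m₂ - 1) := by
    rw [hT, Finset.card_product, Finset.card_range]
    congr 1
    rw [hE, Finset.card_sdiff_of_subset (Finset.subset_univ _),
      Finset.card_image_of_injective _ hstep.start_inj]
    simp [Fintype.card_prod]
  have hk : m₁ * m₂ - n = k := by omega
  rw [hTcard, hk] at hcard
  exact hcard
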